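/- The Choi biquadratic form F(x,y) = x₁²y₁² + x₂²y₂² + x₃²y₃² − 2(x₁y₁x₂y₂ + x₂y₂x₃y₃ + x₁y₁x₃y₃) + 2(x₁²y₂² + x₂²y₃² + x₃²y₁²) is nonnegative for all real x, y but is not a sum of squares of real polynomials. -/

import Mathlib

open MvPolynomial

/-- The Choi biquadratic form in variables `x = (X 0, X 1, X 2)` and
`y = (X 3, X 4, X 5)`. -/
noncomputable def choiForm : MvPolynomial (Fin 6) ℝ :=
  X 0 ^ 2 * X 3 ^ 2 + X 1 ^ 2 * X 4 ^ 2 + X 2 ^ 2 * X 5 ^ 2 -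
    2 * (X 0 * X 3 * X 1 * X 4 + X 1 * X 4 * X 2 * X 5 + X 0 * X 3 * X 2 * X 5) +
    2 * (X 0 ^ 2 * X 4 ^ 2 + X 1 ^ 2 * X 5 ^ 2 + X 2 ^ 2 * X 3 ^ 2)


lemma sum_sq_zero {k : ℕ} (f : Fin k → ℝ) (h : ∑ j, (f j)^2 = 0) : ∀ j, f j = 0 := by
  intro j
  have h0 := (Finset.sum_eq_zero_iff_of_nonneg (fun i _ => sq_nonneg (f i))).mp h j (Finset.mem_univ j)
  exact pow_eq_zero_iff (n := 2) (by norm_num) |>.mp h0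

lemma coeff_sq_top (q : Polynomial ℝ) (d : ℕ) (h : q.natDegree ≤ d) :
    (q^2).coeff (2*d) = (q.coeff d)^2 := by
  rw [sq, Polynomial.coeff_mul]
  rw [Finset.sum_eq_single (d, d)]
  · rw [sq]
  · rintro ⟨i, j⟩ hb hne
    rw [Finset.HasAntidiagonal.mem_antidiagonal] at hb
    have : d < i ∨ d < j := by
      by_contra hcon
      push_neg at hcon
      exact hne (by simp only [Prod.mk.injEq]; omega)
    rcases this with hi | hj
    · rw [Polynomial.coeff_eq_zero_of_natDegree_lt (lt_of_le_of_lt h hi), zero_mul]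
    · rw [Polynomial.coeff_eq_zero_of_natDegree_lt (lt_of_le_of_lt h hj), mul_zero]
  · intro hd
    exact absurd (Finset.HasAntidiagonal.mem_antidiagonal.mpr (by omega)) hd

lemma degle_of_sos {k : ℕ} (p : Fin k → Polynomial ℝ) (P : Polynomial ℝ)
    (hP : ∑ j, (p j)^2 = P) (h2 : P.natDegree ≤ 2) : ∀ j, (p j).natDegree ≤ 1 := by
  by_contra hc
  push_neg at hc
  obtain ⟨j0, hj0⟩ := hc
  have hj0 : 2 ≤ (p j0).natDegree := hj0
  have hne : (Finset.univ : Finset (Fin k)).Nonempty := ⟨j0, Finset.mem_univ _⟩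
  obtain ⟨j1, _, hj1⟩ := Finset.exists_mem_eq_sup Finset.univ hne (fun j => (p j).natDegree)
  set d := Finset.univ.sup (fun j => (p j).natDegree) with hd
  have hdle : ∀ j, (p j).natDegree ≤ d := fun j =>
    Finset.le_sup (f := fun j => (p j).natDegree) (Finset.mem_univ j)
  have hd2 : 2 ≤ d := le_trans hj0 (hdle j0)
  have hcoeff : P.coeff (2*d) = 0 :=
    Polynomial.coeff_eq_zero_of_natDegree_lt (lt_of_le_of_lt h2 (by omega))
  have hsum : ∑ j, ((p j).coeff d)^2 = 0 := by
    rw [← hcoeff, ← hP, Polynomial.finset_sum_coeff]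
    exact Finset.sum_congr rfl (fun j _ => (coeff_sq_top (p j) d (hdle j)).symm)
  have hlead := sum_sq_zero _ hsum j1
  have hne1 : p j1 ≠ 0 := by
    intro h0
    rw [h0] at hj1
    simp at hj1
    omega
  have : (p j1).coeff ((p j1).natDegree) = 0 := by rw [← hj1]; exact hlead
  exact hne1 (Polynomial.leadingCoeff_eq_zero.mp this)

lemma eval_choiForm (v : Fin 6 → ℝ) :
    eval v choiForm = (v 0)^2*(v 3)^2 + (v 1)^2*(v 4)^2 + (v 2)^2*(v 5)^2
      - 2*((v 0)*(v 3)*(v 1)*(v 4) + (v 1)*(v 4)*(v 2)*(v 5) + (v 0)*(v 3)*(v 2)*(v 5))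
      + 2*((v 0)^2*(v 4)^2 + (v 1)^2*(v 5)^2 + (v 2)^2*(v 3)^2) := by
  simp [choiForm]

noncomputable def linePoly (g : MvPolynomial (Fin 6) ℝ) (u w : Fin 6 → ℝ) : Polynomial ℝ :=
  MvPolynomial.aeval (fun i => Polynomial.C (u i) + Polynomial.C (w i) * Polynomial.X) g

lemma eval_linePoly (g : MvPolynomial (Fin 6) ℝ) (u w : Fin 6 → ℝ) (t : ℝ) :
    (linePoly g u w).eval t = eval (fun i => u i + w i * t) g := by
  induction g using MvPolynomial.induction_on with
  | C a => simp [linePoly]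
  | add p q hp hq => simp only [linePoly, map_add, Polynomial.eval_add] at *; rw [hp, hq]
  | mul_X p i hp => simp only [linePoly, map_mul, Polynomial.eval_mul, aeval_X] at *
                    rw [hp]; simp

lemma linePoly_natDegree_le_x (u w : Fin 6 → ℝ)
    (h3 : w 3 = 0) (h4 : w 4 = 0) (h5 : w 5 = 0) :
    (linePoly choiForm u w).natDegree ≤ 2 := by
  have hrep : linePoly choiForm u w =
      Polynomial.C (eval u choiForm)
      + Polynomial.C ((eval (fun i => u i + w i * 1) choiForm
            - eval (fun i => u i + w i * (-1)) choiForm)/2) * Polynomial.X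
      + Polynomial.C ((eval (fun i => u i + w i * 1) choiForm
            + eval (fun i => u i + w i * (-1)) choiForm - 2 * eval u choiForm)/2)
          * Polynomial.X^2 := by
    apply Polynomial.funext
    intro t
    rw [eval_linePoly]
    simp only [Polynomial.eval_add, Polynomial.eval_mul, Polynomial.eval_C,
      Polynomial.eval_X, Polynomial.eval_pow]
    simp only [eval_choiForm, h3, h4, h5]
    ring
  rw [hrep]
  compute_degree

lemma linePoly_natDegree_le_y (u w : Fin 6 → ℝ)
    (h0 : w 0 = 0) (h1 : w 1 = 0) (h2 : w 2 = 0) :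
    (linePoly choiForm u w).natDegree ≤ 2 := by
  have hrep : linePoly choiForm u w =
      Polynomial.C (eval u choiForm)
      + Polynomial.C ((eval (fun i => u i + w i * 1) choiForm
            - eval (fun i => u i + w i * (-1)) choiForm)/2) * Polynomial.X
      + Polynomial.C ((eval (fun i => u i + w i * 1) choiForm
            + eval (fun i => u i + w i * (-1)) choiForm - 2 * eval u choiForm)/2)
          * Polynomial.X^2 := by
    apply Polynomial.funext
    intro t
    rw [eval_linePoly]
    simp only [Polynomial.eval_add, Polynomial.eval_mul, Polynomial.eval_C,
      Polynomial.eval_X, Polynomial.eval_pow]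
    simp only [eval_choiForm, h0, h1, h2]
    ring
  rw [hrep]
  compute_degree

def J (x y : Fin 3 → ℝ) : Fin 6 → ℝ := ![x 0, x 1, x 2, y 0, y 1, y 2]

lemma Jline_x (x x' y : Fin 3 → ℝ) (s : ℝ) :
    (fun i => J x y i + J x' (0 : Fin 3 → ℝ) i * s) = J (fun m => x m + x' m * s) y := by
  funext i; fin_cases i <;> norm_num [J, Matrix.cons_val_succ]

lemma Jline_y (x y y' : Fin 3 → ℝ) (s : ℝ) :
    (fun i => J x y i + J (0 : Fin 3 → ℝ) y' i * s) = J x (fun m => y m + y' m * s) := by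
  funext i; fin_cases i <;> norm_num [J, Matrix.cons_val_succ]

lemma Jx0_3 (x : Fin 3 → ℝ) : J x 0 3 = 0 ∧ J x 0 4 = 0 ∧ J x 0 5 = 0 :=
  ⟨rfl, rfl, rfl⟩

lemma J0y_0 (y : Fin 3 → ℝ) : J 0 y 0 = 0 ∧ J 0 y 1 = 0 ∧ J 0 y 2 = 0 :=
  ⟨rfl, rfl, rfl⟩

section SOSImpossible

variable {k : ℕ} (h : Fin k → MvPolynomial (Fin 6) ℝ)
  (hsos : choiForm = ∑ j, (h j) ^ 2)

lemma eval_x_zero (y : Fin 3 → ℝ) : eval (J 0 y) choiForm = 0 := by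
  obtain ⟨h0, h1, h2⟩ := J0y_0 y
  rw [eval_choiForm, h0, h1, h2]
  ring

lemma eval_y_zero (x : Fin 3 → ℝ) : eval (J x 0) choiForm = 0 := by
  obtain ⟨h3, h4, h5⟩ := Jx0_3 x
  rw [eval_choiForm, h3, h4, h5]
  ring

include hsos

lemma sum_line (u w : Fin 6 → ℝ) :
    ∑ j, (linePoly (h j) u w)^2 = linePoly choiForm u w := by
  rw [hsos]
  simp only [linePoly, map_sum, map_pow]

lemma sum_eval (v : Fin 6 → ℝ) :
    ∑ j, (eval v (h j))^2 = eval v choiForm := by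
  rw [hsos]
  simp only [map_sum, map_pow]


lemma hom_x (x y : Fin 3 → ℝ) (t : ℝ) (j : Fin k) :
    eval (J (fun m => t * x m) y) (h j) = t * eval (J x y) (h j) := by
  set u := J 0 y
  set w := J x 0
  obtain ⟨h3, h4, h5⟩ := Jx0_3 x
  have hdeg : (linePoly choiForm u w).natDegree ≤ 2 :=
    linePoly_natDegree_le_x u w h3 h4 h5
  have hd1 := degle_of_sos _ _ (sum_line h hsos u w) hdeg j
  have hrep := Polynomial.eq_X_add_C_of_natDegree_le_one hd1
  set a := (linePoly (h j) u w).coeff 1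
  set b := (linePoly (h j) u w).coeff 0
  have hev : ∀ s : ℝ, eval (J (fun m => s * x m) y) (h j) = a * s + b := by
    intro s
    have harg : (fun i => u i + w i * s) = J (fun m => s * x m) y := by
      rw [Jline_x 0 x y s]
      congr 1
      funext m
      simp [mul_comm]
    rw [← harg, ← eval_linePoly, hrep]
    simp
  have hb : b = 0 := by
    have h00 : eval (J 0 y) (h j) = 0 := by
      apply sum_sq_zero _ ?_ j
      rw [sum_eval h hsos, eval_x_zero]
    have harg0 : (fun m : Fin 3 => (0:ℝ) * x m) = (0 : Fin 3 → ℝ) := by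
      funext m; simp
    have := hev 0
    rw [harg0] at this
    rw [h00] at this
    linarith
  have h1v : eval (J x y) (h j) = a + b := by
    have harg1 : (fun m : Fin 3 => (1:ℝ) * x m) = x := by funext m; simp
    have := hev 1
    rw [harg1] at this
    linarith
  rw [hev t, h1v, hb]
  ring

lemma hom_y (x y : Fin 3 → ℝ) (t : ℝ) (j : Fin k) :
    eval (J x (fun m => t * y m)) (h j) = t * eval (J x y) (h j) := by
  set u := J x 0
  set w := J 0 y
  obtain ⟨h0, h1, h2⟩ := J0y_0 y
  have hdeg : (linePoly choiForm u w).natDegree ≤ 2 :=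
    linePoly_natDegree_le_y u w h0 h1 h2
  have hd1 := degle_of_sos _ _ (sum_line h hsos u w) hdeg j
  have hrep := Polynomial.eq_X_add_C_of_natDegree_le_one hd1
  set a := (linePoly (h j) u w).coeff 1
  set b := (linePoly (h j) u w).coeff 0
  have hev : ∀ s : ℝ, eval (J x (fun m => s * y m)) (h j) = a * s + b := by
    intro s
    have harg : (fun i => u i + w i * s) = J x (fun m => s * y m) := by
      rw [Jline_y x 0 y s]
      congr 1
      funext m
      simp [mul_comm]
    rw [← harg, ← eval_linePoly, hrep]
    simp
  have hb : b = 0 := by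
    have h00 : eval (J x 0) (h j) = 0 := by
      apply sum_sq_zero _ ?_ j
      rw [sum_eval h hsos, eval_y_zero]
    have harg0 : (fun m : Fin 3 => (0:ℝ) * y m) = (0 : Fin 3 → ℝ) := by
      funext m; simp
    have := hev 0
    rw [harg0] at this
    rw [h00] at this
    linarith
  have h1v : eval (J x y) (h j) = a + b := by
    have harg1 : (fun m : Fin 3 => (1:ℝ) * y m) = y := by funext m; simp
    have := hev 1
    rw [harg1] at this
    linarith
  rw [hev t, h1v, hb]
  ring

lemma add_x (x x' y : Fin 3 → ℝ) (j : Fin k) :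
    eval (J (fun m => x m + x' m) y) (h j)
      = eval (J x y) (h j) + eval (J x' y) (h j) := by
  obtain ⟨hw3, hw4, hw5⟩ := Jx0_3 x'
  obtain ⟨hv3, hv4, hv5⟩ := Jx0_3 x
  have hq1 := degle_of_sos _ _ (sum_line h hsos (J x y) (J x' 0))
    (linePoly_natDegree_le_x _ _ hw3 hw4 hw5) j
  have hr1 := degle_of_sos _ _ (sum_line h hsos (J x' y) (J x 0))
    (linePoly_natDegree_le_x _ _ hv3 hv4 hv5) j
  have hqrep := Polynomial.eq_X_add_C_of_natDegree_le_one hq1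
  have hrrep := Polynomial.eq_X_add_C_of_natDegree_le_one hr1
  set a1 := (linePoly (h j) (J x y) (J x' 0)).coeff 1
  set b1 := (linePoly (h j) (J x y) (J x' 0)).coeff 0
  set a2 := (linePoly (h j) (J x' y) (J x 0)).coeff 1
  set b2 := (linePoly (h j) (J x' y) (J x 0)).coeff 0
  have hq : ∀ s : ℝ, eval (J (fun m => x m + x' m * s) y) (h j) = a1 * s + b1 := by
    intro s
    rw [← Jline_x x x' y s, ← eval_linePoly, hqrep]
    simp
  have hr : ∀ s : ℝ, eval (J (fun m => x' m + x m * s) y) (h j) = a2 * s + b2 := by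
    intro s
    rw [← Jline_x x' x y s, ← eval_linePoly, hrrep]
    simp
  have hb1 : b1 = eval (J x y) (h j) := by
    have := hq 0
    have harg : (fun m => x m + x' m * (0:ℝ)) = x := by funext m; ring
    rw [harg] at this
    linarith
  have hb2 : b2 = eval (J x' y) (h j) := by
    have := hr 0
    have harg : (fun m => x' m + x m * (0:ℝ)) = x' := by funext m; ring
    rw [harg] at this
    linarith
  have heq1 : a2 + b2 = a1 + b1 := by
    have hh1 := hq 1
    have hh2 := hr 1
    have harg : (fun m => x' m + x m * (1:ℝ)) = (fun m => x m + x' m * (1:ℝ)) := by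
      funext m; ring
    rw [harg] at hh2
    linarith
  have heq2 : a2 * 2 + b2 = a1 + 2 * b1 := by
    have hh2 := hr 2
    have hhom := hom_x h hsos (fun m => x m + x' m * (1/2:ℝ)) y 2 j
    have harg : (fun m => x' m + x m * (2:ℝ))
        = (fun m => (2:ℝ) * (x m + x' m * (1/2:ℝ))) := by
      funext m; ring
    rw [harg] at hh2
    rw [hhom, hq (1/2)] at hh2
    linarith
  have hgoal := hq 1
  have harg : (fun m => x m + x' m * (1:ℝ)) = (fun m => x m + x' m) := by
    funext m; ring
  rw [harg] at hgoal
  linarith [hgoal, hb1, hb2, heq1, heq2]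

lemma add_y (x y y' : Fin 3 → ℝ) (j : Fin k) :
    eval (J x (fun m => y m + y' m)) (h j)
      = eval (J x y) (h j) + eval (J x y') (h j) := by
  obtain ⟨hw3, hw4, hw5⟩ := J0y_0 y'
  obtain ⟨hv3, hv4, hv5⟩ := J0y_0 y
  have hq1 := degle_of_sos _ _ (sum_line h hsos (J x y) (J 0 y'))
    (linePoly_natDegree_le_y _ _ hw3 hw4 hw5) j
  have hr1 := degle_of_sos _ _ (sum_line h hsos (J x y') (J 0 y))
    (linePoly_natDegree_le_y _ _ hv3 hv4 hv5) j
  have hqrep := Polynomial.eq_X_add_C_of_natDegree_le_one hq1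
  have hrrep := Polynomial.eq_X_add_C_of_natDegree_le_one hr1
  set a1 := (linePoly (h j) (J x y) (J 0 y')).coeff 1
  set b1 := (linePoly (h j) (J x y) (J 0 y')).coeff 0
  set a2 := (linePoly (h j) (J x y') (J 0 y)).coeff 1
  set b2 := (linePoly (h j) (J x y') (J 0 y)).coeff 0
  have hq : ∀ s : ℝ, eval (J x (fun m => y m + y' m * s)) (h j) = a1 * s + b1 := by
    intro s
    rw [← Jline_y x y y' s, ← eval_linePoly, hqrep]
    simp
  have hr : ∀ s : ℝ, eval (J x (fun m => y' m + y m * s)) (h j) = a2 * s + b2 := by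
    intro s
    rw [← Jline_y x y' y s, ← eval_linePoly, hrrep]
    simp
  have hb1 : b1 = eval (J x y) (h j) := by
    have := hq 0
    have harg : (fun m => y m + y' m * (0:ℝ)) = y := by funext m; ring
    rw [harg] at this
    linarith
  have hb2 : b2 = eval (J x y') (h j) := by
    have := hr 0
    have harg : (fun m => y' m + y m * (0:ℝ)) = y' := by funext m; ring
    rw [harg] at this
    linarith
  have heq1 : a2 + b2 = a1 + b1 := by
    have hh1 := hq 1
    have hh2 := hr 1
    have harg : (fun m => y' m + y m * (1:ℝ)) = (fun m => y m + y' m * (1:ℝ)) := by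
      funext m; ring
    rw [harg] at hh2
    linarith
  have heq2 : a2 * 2 + b2 = a1 + 2 * b1 := by
    have hh2 := hr 2
    have hhom := hom_y h hsos x (fun m => y m + y' m * (1/2:ℝ)) 2 j
    have harg : (fun m => y' m + y m * (2:ℝ))
        = (fun m => (2:ℝ) * (y m + y' m * (1/2:ℝ))) := by
      funext m; ring
    rw [harg] at hh2
    rw [hhom, hq (1/2)] at hh2
    linarith
  have hgoal := hq 1
  have harg : (fun m => y m + y' m * (1:ℝ)) = (fun m => y m + y' m) := by
    funext m; ring
  rw [harg] at hgoal
  linarith [hgoal, hb1, hb2, heq1, heq2]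

end SOSImpossible

def e1 : Fin 3 → ℝ := ![1,0,0]
def e2 : Fin 3 → ℝ := ![0,1,0]
def e3 : Fin 3 → ℝ := ![0,0,1]

@[simp] lemma e1_0 : e1 0 = 1 := rfl
@[simp] lemma e1_1 : e1 1 = 0 := rfl
@[simp] lemma e1_2 : e1 2 = 0 := rfl
@[simp] lemma e2_0 : e2 0 = 0 := rfl
@[simp] lemma e2_1 : e2 1 = 1 := rfl
@[simp] lemma e2_2 : e2 2 = 0 := rfl
@[simp] lemma e3_0 : e3 0 = 0 := rfl
@[simp] lemma e3_1 : e3 1 = 0 := rfl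
@[simp] lemma e3_2 : e3 2 = 1 := rfl

lemma eval_choi_J (x y : Fin 3 → ℝ) :
    eval (J x y) choiForm = (x 0)^2*(y 0)^2 + (x 1)^2*(y 1)^2 + (x 2)^2*(y 2)^2
      - 2*((x 0)*(y 0)*(x 1)*(y 1) + (x 1)*(y 1)*(x 2)*(y 2) + (x 0)*(y 0)*(x 2)*(y 2))
      + 2*((x 0)^2*(y 1)^2 + (x 1)^2*(y 2)^2 + (x 2)^2*(y 0)^2) := by
  rw [eval_choiForm]; rfl

section Main

variable {k : ℕ} (h : Fin k → MvPolynomial (Fin 6) ℝ)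
  (hsos : choiForm = ∑ j, (h j) ^ 2)

include hsos

lemma expand_bilinear (xa xb ya yb : Fin 3 → ℝ) (ε : ℝ) (j : Fin k) :
    eval (J (fun m => xa m + ε * xb m) (fun m => ya m + ε * yb m)) (h j)
      = eval (J xa ya) (h j) + ε * eval (J xa yb) (h j)
        + ε * eval (J xb ya) (h j) + ε^2 * eval (J xb yb) (h j) := by
  have h1 := add_x h hsos xa (fun m => ε * xb m) (fun m => ya m + ε * yb m) j
  have h2 := hom_x h hsos xb (fun m => ya m + ε * yb m) ε j
  have h3 := add_y h hsos xa ya (fun m => ε * yb m) j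
  have h4 := add_y h hsos xb ya (fun m => ε * yb m) j
  have h5 := hom_y h hsos xa yb ε j
  have h6 := hom_y h hsos xb yb ε j
  rw [h1, h2, h3, h4, h5, h6]
  ring

lemma choi_not_sos : False := by
  -- basis coefficient sums
  have hzero_block : ∀ (x y : Fin 3 → ℝ), eval (J x y) choiForm = 0 →
      ∀ j, eval (J x y) (h j) = 0 := by
    intro x y h0 j
    apply sum_sq_zero _ ?_ j
    rw [sum_eval h hsos, h0]
  have hz21 : ∀ j, eval (J e2 e1) (h j) = 0 := by
    apply hzero_block
    rw [eval_choi_J]; norm_num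
  have hz32 : ∀ j, eval (J e3 e2) (h j) = 0 := by
    apply hzero_block
    rw [eval_choi_J]; norm_num
  have hz13 : ∀ j, eval (J e1 e3) (h j) = 0 := by
    apply hzero_block
    rw [eval_choi_J]; norm_num
  have hA : ∑ j, (eval (J e1 e1) (h j))^2 = 1 := by
    rw [sum_eval h hsos, eval_choi_J]; norm_num
  have hB : ∑ j, (eval (J e2 e2) (h j))^2 = 1 := by
    rw [sum_eval h hsos, eval_choi_J]; norm_num
  have hD : ∑ j, (eval (J e3 e3) (h j))^2 = 1 := by
    rw [sum_eval h hsos, eval_choi_J]; norm_num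
  have hP : ∑ j, (eval (J e1 e2) (h j))^2 = 2 := by
    rw [sum_eval h hsos, eval_choi_J]; norm_num
  have hQ : ∑ j, (eval (J e2 e3) (h j))^2 = 2 := by
    rw [sum_eval h hsos, eval_choi_J]; norm_num
  have hR : ∑ j, (eval (J e3 e1) (h j))^2 = 2 := by
    rw [sum_eval h hsos, eval_choi_J]; norm_num
  -- mixed sums for a block
  have block : ∀ (ea eb : Fin 3 → ℝ) (ε : ℝ), ε^2 = 1 →
      eval (J (fun m => ea m + ε * eb m) (fun m => ea m + ε * eb m)) choiForm = 2 →
      (∀ j, eval (J eb ea) (h j) = 0) →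
      ∑ j, (eval (J ea ea) (h j) + eval (J eb eb) (h j)
            + ε * eval (J ea eb) (h j))^2 = 2 := by
    intro ea eb ε hε hF hzba
    have hsum := sum_eval h hsos (J (fun m => ea m + ε * eb m) (fun m => ea m + ε * eb m))
    rw [hF] at hsum
    rw [← hsum]
    apply Finset.sum_congr rfl
    intro j _
    have := expand_bilinear h hsos ea eb ea eb ε j
    rw [this, hzba j, hε]
    ring
  -- apply to the three blocks with both signs
  have hF12 : ∀ ε : ℝ, ε^2 = 1 →
      eval (J (fun m => e1 m + ε * e2 m) (fun m => e1 m + ε * e2 m)) choiForm = 2 := by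
    intro ε hε
    rw [eval_choi_J]; simp; nlinarith [hε]
  have hF23 : ∀ ε : ℝ, ε^2 = 1 →
      eval (J (fun m => e2 m + ε * e3 m) (fun m => e2 m + ε * e3 m)) choiForm = 2 := by
    intro ε hε
    rw [eval_choi_J]; simp; nlinarith [hε]
  have hF31 : ∀ ε : ℝ, ε^2 = 1 →
      eval (J (fun m => e3 m + ε * e1 m) (fun m => e3 m + ε * e1 m)) choiForm = 2 := by
    intro ε hε
    rw [eval_choi_J]; simp; nlinarith [hε]
  have h12p := block e1 e2 1 (by norm_num) (hF12 1 (by norm_num)) hz21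
  have h12m := block e1 e2 (-1) (by norm_num) (hF12 (-1) (by norm_num)) hz21
  have h23p := block e2 e3 1 (by norm_num) (hF23 1 (by norm_num)) hz32
  have h23m := block e2 e3 (-1) (by norm_num) (hF23 (-1) (by norm_num)) hz32
  have h31p := block e3 e1 1 (by norm_num) (hF31 1 (by norm_num)) hz13
  have h31m := block e3 e1 (-1) (by norm_num) (hF31 (-1) (by norm_num)) hz13
  -- derive that the diagonal entries pairwise cancel
  have pair : ∀ (A B P : Fin k → ℝ),
      (∑ j, (A j + B j + 1 * P j)^2) = 2 →
      (∑ j, (A j + B j + (-1) * P j)^2) = 2 →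
      (∑ j, (P j)^2) = 2 →
      ∀ j, A j + B j = 0 := by
    intro A B P hp hm hP2
    have h1 : ∑ j, ((A j + B j + 1 * P j)^2 + (A j + B j + (-1) * P j)^2) = 4 := by
      rw [Finset.sum_add_distrib, hp, hm]; norm_num
    have h2 : ∀ j : Fin k, (A j + B j + 1 * P j)^2 + (A j + B j + (-1) * P j)^2
        = 2*(A j + B j)^2 + 2*(P j)^2 := by intro j; ring
    rw [Finset.sum_congr rfl (fun j _ => h2 j)] at h1
    rw [Finset.sum_add_distrib, ← Finset.mul_sum, ← Finset.mul_sum, hP2] at h1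
    have h3 : ∑ j, (A j + B j)^2 = 0 := by linarith
    exact sum_sq_zero _ h3
  have hab := pair _ _ _ h12p h12m hP
  have hbd := pair _ _ _ h23p h23m hQ
  have hda := pair _ _ _ h31p h31m hR
  have hA0 : ∀ j, eval (J e1 e1) (h j) = 0 := by
    intro j
    have := hab j; have := hbd j; have := hda j
    linarith
  have : (1:ℝ) = 0 := by
    rw [← hA]
    apply Finset.sum_eq_zero
    intro j _
    rw [hA0 j]
    ring
  norm_num at this

end Main

lemma choi_psd (v : Fin 6 → ℝ) : 0 ≤ eval v choiForm := by
  rw [eval_choiForm]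
  set x1 := v 0; set x2 := v 1; set x3 := v 2
  set y1 := v 3; set y2 := v 4; set y3 := v 5
  by_cases hM : y1^2 + 2*y2^2 = 0
  · have hy1 : y1 = 0 := by nlinarith [sq_nonneg y1, sq_nonneg y2]
    have hy2 : y2 = 0 := by nlinarith [sq_nonneg y1, sq_nonneg y2]
    rw [hy1, hy2]; nlinarith [sq_nonneg (x3*y3), sq_nonneg (x2*y3)]
  · have hMpos : 0 < y1^2 + 2*y2^2 := lt_of_le_of_ne (by positivity) (Ne.symm hM)
    by_cases hN : (2*y1^2*y3^2 + 2*y2^4 + 4*y2^2*y3^2) = 0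
    · have h4 : y2^4 = 0 := by nlinarith [sq_nonneg (y1*y3), sq_nonneg (y2*y3)]
      have hy2 : y2 = 0 := by
        exact pow_eq_zero_iff (n := 4) (by norm_num) |>.mp h4
      rw [hy2]; nlinarith [sq_nonneg (x1*y1 - x3*y3), sq_nonneg (x2*y3), sq_nonneg (x3*y1)]
    · have hNpos : 0 < 2*y1^2*y3^2 + 2*y2^4 + 4*y2^2*y3^2 := lt_of_le_of_ne (by positivity) (Ne.symm hN)
      have key : (y1^2 + 2*y2^2) * (2*y1^2*y3^2 + 2*y2^4 + 4*y2^2*y3^2) *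
          (x1^2*y1^2 + x2^2*y2^2 + x3^2*y3^2
            - 2*(x1*y1*x2*y2 + x2*y2*x3*y3 + x1*y1*x3*y3)
            + 2*(x1^2*y2^2 + x2^2*y3^2 + x3^2*y1^2))
          = (2*y1^2*y3^2 + 2*y2^4 + 4*y2^2*y3^2) *
              ((y1^2 + 2*y2^2)*x1 - y1*y2*x2 - y1*y3*x3)^2
            + ((2*y1^2*y3^2 + 2*y2^4 + 4*y2^2*y3^2)*x2
                - 2*y2*y3*(y1^2 + y2^2)*x3)^2
            + (4*y1^6*y3^2 + 4*y1^2*y2^2*y3^4 + 12*y1^4*y2^2*y3^2 + 4*y1^4*y2^4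
                + 8*y1^2*y2^6 + 8*y2^4*y3^4 + 8*y1^2*y2^4*y3^2) * x3^2 := by
        ring
      have hpos : 0 ≤ (2*y1^2*y3^2 + 2*y2^4 + 4*y2^2*y3^2) *
              ((y1^2 + 2*y2^2)*x1 - y1*y2*x2 - y1*y3*x3)^2
            + ((2*y1^2*y3^2 + 2*y2^4 + 4*y2^2*y3^2)*x2
                - 2*y2*y3*(y1^2 + y2^2)*x3)^2
            + (4*y1^6*y3^2 + 4*y1^2*y2^2*y3^4 + 12*y1^4*y2^2*y3^2 + 4*y1^4*y2^4
                + 8*y1^2*y2^6 + 8*y2^4*y3^4 + 8*y1^2*y2^4*y3^2) * x3^2 := by positivity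
      nlinarith [mul_pos hMpos hNpos, key, hpos]

theorem choi_form_psd_not_sos :
    (∀ v : Fin 6 → ℝ, 0 ≤ eval v choiForm) ∧
    ¬ ∃ (k : ℕ) (h : Fin k → MvPolynomial (Fin 6) ℝ),
        choiForm = ∑ j, (h j) ^ 2 := by
  constructor
  · exact choi_psd
  · rintro ⟨k, h, hsos⟩
    exact choi_not_sos h hsos
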